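/- The sine integral Si(x) = ∫_0^x sin(t)/t dt tends to π/2 as x → +∞. -/

import Mathlib

open Real Filter

section SiAux
open MeasureTheory Set intervalIntegral
set_option maxHeartbeats 1000000

lemma exp_neg_mul_integral {t : ℝ} (ht : 0 < t) :
    ∫ s in Ioi (0:ℝ), Real.exp (-(s * t)) = 1 / t := by
  have := MeasureTheory.integral_comp_mul_right_Ioi (fun u => Real.exp (-u)) 0 ht
  simp only [zero_mul] at this
  rw [this, integral_exp_neg_Ioi, neg_zero, Real.exp_zero, smul_eq_mul, mul_one, one_div]

lemma inner_eval {s : ℝ} (X : ℝ) :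
    ∫ t in (0:ℝ)..X, Real.sin t * Real.exp (-(s * t))
      = (1 - Real.exp (-(s * X)) * (Real.cos X + s * Real.sin X)) / (1 + s ^ 2) := by
  have h1 : (1 + s ^ 2) ≠ 0 := by positivity
  have key : ∀ t : ℝ, HasDerivAt
      (fun t => -(Real.exp (-(s * t)) * (Real.cos t + s * Real.sin t)) / (1 + s ^ 2))
      (Real.sin t * Real.exp (-(s * t))) t := by
    intro t
    have he : HasDerivAt (fun t => Real.exp (-(s * t))) (-s * Real.exp (-(s * t))) t := by
      have : HasDerivAt (fun t : ℝ => -(s * t)) (-s) t := by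
        exact ((hasDerivAt_id t).const_mul s).neg.congr_deriv (by simp)
      simpa [mul_comm] using this.exp
    have hc : HasDerivAt (fun t => Real.cos t + s * Real.sin t)
        (-Real.sin t + s * Real.cos t) t :=
      (Real.hasDerivAt_cos t).add ((Real.hasDerivAt_sin t).const_mul s)
    have := ((he.mul hc).neg).div_const (1 + s ^ 2)
    refine this.congr_deriv ?_
    field_simp
    ring
  rw [intervalIntegral.integral_eq_sub_of_hasDerivAt (fun t _ => key t)
    (((Real.continuous_sin).mul (by continuity)).intervalIntegrable 0 X)]
  simp [Real.exp_zero]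
  ring


lemma t_exp_eval {s : ℝ} (hs : 0 < s) (X : ℝ) (hX : 0 ≤ X) :
    ∫ t in (0:ℝ)..X, t * Real.exp (-(s * t)) ≤ 1 / s ^ 2 := by
  have key : ∀ t : ℝ, HasDerivAt
      (fun t => -((t / s + 1 / s ^ 2) * Real.exp (-(s * t))))
      (t * Real.exp (-(s * t))) t := by
    intro t
    have he : HasDerivAt (fun t => Real.exp (-(s * t))) (-s * Real.exp (-(s * t))) t := by
      have : HasDerivAt (fun t : ℝ => -(s * t)) (-s) t := by
        exact ((hasDerivAt_id t).const_mul s).neg.congr_deriv (by simp)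
      simpa [mul_comm] using this.exp
    have hl : HasDerivAt (fun t : ℝ => t / s + 1 / s ^ 2) (1 / s) t := by
      have := ((hasDerivAt_id t).div_const s).add_const (1 / s ^ 2)
      simpa [one_div] using this
    have := (hl.mul he).neg
    refine this.congr_deriv ?_
    field_simp
    ring
  rw [intervalIntegral.integral_eq_sub_of_hasDerivAt (fun t _ => key t)
    ((continuous_id.mul (by continuity)).intervalIntegrable 0 X)]
  have h1 : 0 ≤ (X / s + 1 / s ^ 2) * Real.exp (-(s * X)) := by positivity
  simp only [mul_zero, neg_zero, Real.exp_zero, mul_one, zero_div, zero_add]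
  linarith

lemma fubini_int {X : ℝ} (hX : 0 < X) :
    Integrable (Function.uncurry fun s t => Real.sin t * Real.exp (-(s * t)))
      ((volume.restrict (Ioi (0:ℝ))).prod (volume.restrict (Ioc (0:ℝ) X))) := by
  have hcont : Continuous (Function.uncurry fun s t : ℝ => Real.sin t * Real.exp (-(s * t))) := by
    apply Continuous.mul
    · exact Real.continuous_sin.comp continuous_snd
    · exact Real.continuous_exp.comp (continuous_fst.mul continuous_snd).neg
  rw [MeasureTheory.integrable_prod_iff hcont.aestronglyMeasurable]
  constructor
  · refine Eventually.of_forall fun s => ?_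
    exact ((Real.continuous_sin.mul (by continuity)).integrableOn_Ioc)
  · -- integrable (fun s => ∫ t in Ioc 0 X, ‖sin t * exp (-(s*t))‖)
    have hbound : ∀ s ∈ Ioi (0:ℝ),
        ‖∫ t in Ioc (0:ℝ) X, ‖Real.sin t * Real.exp (-(s * t))‖‖ ≤ min (X ^ 2) (1 / s ^ 2) := by
      intro s hs
      have hs' : (0:ℝ) < s := hs
      have hnn : 0 ≤ ∫ t in Ioc (0:ℝ) X, ‖Real.sin t * Real.exp (-(s * t))‖ :=
        integral_nonneg fun t => norm_nonneg _
      rw [Real.norm_of_nonneg hnn, le_min_iff]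
      have hmono : ∫ t in Ioc (0:ℝ) X, ‖Real.sin t * Real.exp (-(s * t))‖
          ≤ ∫ t in Ioc (0:ℝ) X, t * Real.exp (-(s * t)) := by
        apply setIntegral_mono_on
        · exact ((Real.continuous_sin.mul (by continuity)).integrableOn_Ioc).norm
        · exact (continuous_id.mul (by continuity)).integrableOn_Ioc
        · exact measurableSet_Ioc
        · intro t ht
          rw [norm_mul, Real.norm_of_nonneg (Real.exp_nonneg _)]
          gcongr
          calc ‖Real.sin t‖ = |Real.sin t| := rfl
            _ ≤ |t| := Real.abs_sin_le_abs
            _ = t := abs_of_pos ht.1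
      constructor
      · calc _ ≤ ∫ t in Ioc (0:ℝ) X, t * Real.exp (-(s * t)) := hmono
          _ ≤ ∫ t in Ioc (0:ℝ) X, X := by
            apply setIntegral_mono_on
            · exact (continuous_id.mul (by continuity)).integrableOn_Ioc
            · exact integrableOn_const measure_Ioc_lt_top.ne
            · exact measurableSet_Ioc
            · intro t ht
              have hexp : Real.exp (-(s * t)) ≤ 1 := by
                rw [Real.exp_le_one_iff]
                nlinarith [ht.1.le, hs'.le]
              calc t * Real.exp (-(s * t)) ≤ t * 1 :=
                    mul_le_mul_of_nonneg_left hexp ht.1.le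
                _ = t := mul_one t
                _ ≤ X := ht.2
          _ = X * X := by simp [Real.volume_Ioc, hX.le]
          _ = X ^ 2 := (sq X).symm
      · calc _ ≤ ∫ t in Ioc (0:ℝ) X, t * Real.exp (-(s * t)) := hmono
          _ = ∫ t in (0:ℝ)..X, t * Real.exp (-(s * t)) :=
            (intervalIntegral.integral_of_le hX.le).symm
          _ ≤ 1 / s ^ 2 := t_exp_eval hs' X hX.le
    have hgint : IntegrableOn (fun s : ℝ => min (X ^ 2) (1 / s ^ 2)) (Ioi (0:ℝ)) := by
      have hmeas : Measurable (fun s : ℝ => min (X ^ 2) (1 / s ^ 2)) := by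
        fun_prop
      rw [← Ioc_union_Ioi_eq_Ioi (by norm_num : (0:ℝ) ≤ 1), integrableOn_union]
      constructor
      · have hconst : IntegrableOn (fun _ : ℝ => X ^ 2) (Ioc (0:ℝ) 1) volume :=
          integrableOn_const measure_Ioc_lt_top.ne
        refine Integrable.mono' hconst hmeas.aestronglyMeasurable ?_
        refine ae_of_all _ fun s => ?_
        rw [Real.norm_of_nonneg (le_min (by positivity) (by positivity))]
        exact min_le_left _ _
      · refine Integrable.mono' ((integrableOn_Ioi_rpow_of_lt (by norm_num : (-2:ℝ) < -1)
          (by norm_num : (0:ℝ) < 1))) hmeas.aestronglyMeasurable ?_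
        rw [ae_restrict_iff' measurableSet_Ioi]
        refine ae_of_all _ fun s hs => ?_
        have hs1 : (1:ℝ) < s := hs
        rw [Real.norm_of_nonneg (le_min (by positivity) (by positivity))]
        calc min (X ^ 2) (1 / s ^ 2) ≤ 1 / s ^ 2 := min_le_right _ _
          _ = s ^ (-2 : ℝ) := by
            rw [Real.rpow_neg (by linarith), one_div]
            norm_cast
    refine Integrable.mono' hgint
      ((hcont.norm.aestronglyMeasurable).integral_prod_right') ?_
    rw [ae_restrict_iff' measurableSet_Ioi]
    exact ae_of_all _ hbound

lemma pt_bound {X s : ℝ} (hs : 0 < s) :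
    ‖Real.exp (-(s * X)) * (Real.cos X + s * Real.sin X) / (1 + s ^ 2)‖
      ≤ 2 * Real.exp (-(s * X)) := by
  have h1 : (0:ℝ) < 1 + s ^ 2 := by positivity
  rw [norm_div, norm_mul, Real.norm_of_nonneg (Real.exp_nonneg _),
    Real.norm_of_nonneg h1.le, div_le_iff₀ h1]
  have hb : ‖Real.cos X + s * Real.sin X‖ ≤ 1 + s := by
    calc ‖Real.cos X + s * Real.sin X‖ ≤ ‖Real.cos X‖ + ‖s * Real.sin X‖ := norm_add_le _ _
      _ ≤ 1 + s := by
        rw [norm_mul, Real.norm_of_nonneg hs.le]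
        gcongr
        · exact Real.abs_cos_le_one X
        · calc s * ‖Real.sin X‖ ≤ s * 1 :=
              mul_le_mul_of_nonneg_left (Real.abs_sin_le_one X) hs.le
            _ = s := mul_one s
  nlinarith [Real.exp_nonneg (-(s * X)), sq_nonneg (s - 1)]

lemma exp_integrable {X : ℝ} (hX : 0 < X) :
    IntegrableOn (fun s : ℝ => 2 * Real.exp (-(s * X))) (Ioi (0:ℝ)) := by
  have h : IntegrableOn (fun s : ℝ => 2 * Real.exp (-X * s)) (Ioi (0:ℝ)) :=
    (exp_neg_integrableOn_Ioi 0 hX).const_mul 2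
  exact IntegrableOn.congr_fun h (fun s _ => by rw [neg_mul, mul_comm X s]) measurableSet_Ioi

lemma exp_integral {X : ℝ} (hX : 0 < X) :
    ∫ s in Ioi (0:ℝ), 2 * Real.exp (-(s * X)) = 2 / X := by
  rw [MeasureTheory.integral_const_mul, exp_neg_mul_integral hX]
  ring

end SiAux

/-- The sine integral `Si(x) = ∫_0^x sin t / t dt`. -/
noncomputable def Si (x : ℝ) : ℝ := ∫ t in (0 : ℝ)..x, Real.sin t / t

section SiAux2
open MeasureTheory Set intervalIntegral
set_option maxHeartbeats 1000000


lemma remainder_integrable {X : ℝ} (hX : 0 < X) :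
    IntegrableOn (fun s : ℝ =>
      Real.exp (-(s * X)) * (Real.cos X + s * Real.sin X) / (1 + s ^ 2)) (Ioi (0:ℝ)) := by
  have hc : Continuous (fun s : ℝ =>
      Real.exp (-(s * X)) * (Real.cos X + s * Real.sin X) / (1 + s ^ 2)) := by
    apply Continuous.div (by continuity) (by continuity)
    intro s; positivity
  refine Integrable.mono' (exp_integrable hX) hc.aestronglyMeasurable ?_
  rw [ae_restrict_iff' measurableSet_Ioi]
  refine ae_of_all _ fun s hs => ?_
  exact pt_bound hs

lemma si_eq {X : ℝ} (hX : 0 < X) :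
    Si X = π / 2 - ∫ s in Ioi (0:ℝ),
      Real.exp (-(s * X)) * (Real.cos X + s * Real.sin X) / (1 + s ^ 2) := by
  have h1 : Si X = ∫ t in Ioc (0:ℝ) X, Real.sin t / t := by
    rw [Si, intervalIntegral.integral_of_le hX.le]
  have h2 : ∀ t ∈ Ioc (0:ℝ) X, Real.sin t / t
      = ∫ s in Ioi (0:ℝ), Real.sin t * Real.exp (-(s * t)) := by
    intro t ht
    rw [MeasureTheory.integral_const_mul, exp_neg_mul_integral ht.1]
    ring
  rw [h1, setIntegral_congr_fun measurableSet_Ioc h2,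
    ← MeasureTheory.integral_integral_swap (fubini_int hX)]
  have h3 : ∀ s ∈ Ioi (0:ℝ), (∫ t in Ioc (0:ℝ) X, Real.sin t * Real.exp (-(s * t)))
      = (1 + s ^ 2)⁻¹
        - Real.exp (-(s * X)) * (Real.cos X + s * Real.sin X) / (1 + s ^ 2) := by
    intro s _
    rw [← intervalIntegral.integral_of_le hX.le, inner_eval X, sub_div]
    congr 1
    rw [one_div]
  rw [setIntegral_congr_fun measurableSet_Ioi h3,
    MeasureTheory.integral_sub (integrable_inv_one_add_sq.integrableOn)
      (remainder_integrable hX)]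
  congr 1
  rw [integral_Ioi_inv_one_add_sq, Real.arctan_zero, sub_zero]

end SiAux2

open MeasureTheory Set in
set_option maxHeartbeats 1000000 in
/-- `Si(x) → π/2` as `x → +∞`. -/
theorem si_tendsto_pi_div_two : Tendsto Si atTop (nhds (π / 2)) := by
  set R : ℝ → ℝ := fun X => ∫ s in Ioi (0:ℝ),
    Real.exp (-(s * X)) * (Real.cos X + s * Real.sin X) / (1 + s ^ 2) with hRdef
  have hRlim : Tendsto R atTop (nhds 0) := by
    refine squeeze_zero_norm' (a := fun X : ℝ => 2 / X) ?_ ?_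
    · filter_upwards [eventually_gt_atTop (0:ℝ)] with X hX
      calc ‖R X‖ ≤ ∫ s in Ioi (0:ℝ), 2 * Real.exp (-(s * X)) := by
            apply norm_integral_le_of_norm_le (exp_integrable hX)
            rw [ae_restrict_iff' measurableSet_Ioi]
            exact ae_of_all _ fun s hs => pt_bound hs
        _ = 2 / X := exp_integral hX
    · exact tendsto_const_nhds.div_atTop tendsto_id
  have heq : ∀ᶠ X in atTop, π / 2 - R X = Si X := by
    filter_upwards [eventually_gt_atTop (0:ℝ)] with X hX
    rw [si_eq hX]
  have h := (tendsto_const_nhds.sub hRlim :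
    Tendsto (fun X => π / 2 - R X) atTop (nhds (π / 2 - 0)))
  rw [sub_zero] at h
  exact h.congr' heq
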